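/- Let 0 < ω < 2π and S_ω := {(r cos θ, r sin θ) : r > 0, 0 < θ < ω} ⊆ ℝ². For every point p ∈ S_ω there exists a continuously differentiable path γ : [0, 1] → ℝ² ∖ {0} with γ(0) = p, γ(t) ∈ S_ω for all t ∈ [0, 1), γ(1) in the topological boundary of S_ω, and ∫₀¹ |γ(t)|^{-1} |γ'(t)| dt ≤ 2π. (In other words, with respect to the conformally rescaled metric g = |x|^{-2} g_E on the sector, every point lies at g-distance at most 2π from the boundary: the pair (S_ω, ∂S_ω, g) has finite width; this is the finite-width property for a conical point with λ = 1.) -/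

import Mathlib

open MeasureTheory Real Set Topology Filter

/-- The open planar sector `S_ω = {(r cos θ, r sin θ) : r > 0, 0 < θ < ω}` of opening `ω`. -/
def planarSector (ω : ℝ) : Set (EuclideanSpace ℝ (Fin 2)) :=
  {x | ∃ r θ : ℝ, 0 < r ∧ 0 < θ ∧ θ < ω ∧ x 0 = r * Real.cos θ ∧ x 1 = r * Real.sin θ}

noncomputable def E0 : EuclideanSpace ℝ (Fin 2) := EuclideanSpace.single 0 1
noncomputable def E1 : EuclideanSpace ℝ (Fin 2) := EuclideanSpace.single 1 1

lemma vec_apply0 (a b : ℝ) : (a • E0 + b • E1) 0 = a := by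
  simp [E0, E1, EuclideanSpace.single_apply]
lemma vec_apply1 (a b : ℝ) : (a • E0 + b • E1) 1 = b := by
  simp [E0, E1, EuclideanSpace.single_apply]

lemma vec_norm (a b : ℝ) : ‖a • E0 + b • E1‖ = Real.sqrt (a^2 + b^2) := by
  rw [EuclideanSpace.norm_eq]
  congr 1
  rw [Fin.sum_univ_two, vec_apply0, vec_apply1]
  simp [Real.norm_eq_abs, sq_abs]

lemma sin_zero_of (θ : ℝ) (h0 : 0 < θ) (h2 : θ < 2 * π) (hs : Real.sin θ = 0) : θ = π := by
  rcases Real.sin_eq_zero_iff.1 hs with ⟨n, hn⟩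
  have hπ := Real.pi_pos
  have hn1 : n = 1 := by
    by_contra h
    rcases lt_or_gt_of_ne h with h1 | h1
    · have : (n : ℝ) ≤ 0 := by
        have : (n : ℝ) ≤ 1 - 1 := by exact_mod_cast Int.le_sub_one_of_lt h1
        linarith
      nlinarith
    · have : (2 : ℝ) ≤ (n : ℝ) := by exact_mod_cast h1
      nlinarith
  rw [← hn, hn1]; norm_num

/-- **Finite width of a sector in the conformally rescaled metric `g = |x|⁻² g_E`.** For
`0 < ω < 2π`, every point `p` of the sector `S_ω` can be joined to the boundary by a `C¹` path
`γ` avoiding the origin whose length `∫₀¹ |γ(t)|⁻¹ |γ'(t)| dt` in the metric `|x|⁻² g_E` is at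
most `2π`. -/
theorem sector_finite_width (ω : ℝ) (hω0 : 0 < ω) (hω : ω < 2 * π)
    (p : EuclideanSpace ℝ (Fin 2)) (hp : p ∈ planarSector ω) :
    ∃ γ : ℝ → EuclideanSpace ℝ (Fin 2), ContDiffOn ℝ 1 γ (Icc 0 1) ∧
      γ 0 = p ∧ (∀ t ∈ Ico (0 : ℝ) 1, γ t ∈ planarSector ω) ∧
      γ 1 ∈ frontier (planarSector ω) ∧
      (∀ t ∈ Icc (0 : ℝ) 1, γ t ≠ 0) ∧
      ∫ t in (0 : ℝ)..1, ‖γ t‖⁻¹ * ‖deriv γ t‖ ≤ 2 * π := by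
  obtain ⟨r, θ, hr, hθ0, hθω, hp0, hp1⟩ := hp
  have hπ := Real.pi_pos
  set γ : ℝ → EuclideanSpace ℝ (Fin 2) :=
    fun t => (r * Real.cos ((1 - t) * θ)) • E0 + (r * Real.sin ((1 - t) * θ)) • E1 with hγ
  set D : ℝ → EuclideanSpace ℝ (Fin 2) :=
    fun t => (r * θ * Real.sin ((1 - t) * θ)) • E0 + (-(r * θ * Real.cos ((1 - t) * θ))) • E1
    with hD
  have hderiv : ∀ t : ℝ, HasDerivAt γ (D t) t := by
    intro t
    have hu : HasDerivAt (fun t : ℝ => (1 - t) * θ) (-θ) t := by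
      simpa using ((hasDerivAt_id t).const_sub 1).mul_const θ
    have hc : HasDerivAt (fun t : ℝ => Real.cos ((1 - t) * θ))
        (-Real.sin ((1 - t) * θ) * (-θ)) t :=
      (Real.hasDerivAt_cos _).comp t hu
    have hs : HasDerivAt (fun t : ℝ => Real.sin ((1 - t) * θ))
        (Real.cos ((1 - t) * θ) * (-θ)) t :=
      (Real.hasDerivAt_sin _).comp t hu
    have h1 := ((hc.const_mul r).smul_const E0).add ((hs.const_mul r).smul_const E1)
    have e : D t = (r * (-Real.sin ((1 - t) * θ) * (-θ))) • E0
        + (r * (Real.cos ((1 - t) * θ) * (-θ))) • E1 := by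
      simp only [hD]; congr 1 <;> congr 1 <;> ring
    rw [e]; exact h1
  have hnormγ : ∀ t : ℝ, ‖γ t‖ = r := by
    intro t
    rw [hγ]
    simp only
    rw [vec_norm]
    have : (r * Real.cos ((1 - t) * θ)) ^ 2 + (r * Real.sin ((1 - t) * θ)) ^ 2 = r ^ 2 := by
      have := Real.sin_sq_add_cos_sq ((1 - t) * θ)
      nlinarith
    rw [this, Real.sqrt_sq hr.le]
  have hnormD : ∀ t : ℝ, ‖D t‖ = r * θ := by
    intro t
    rw [hD]
    simp only
    rw [vec_norm]
    have : (r * θ * Real.sin ((1 - t) * θ)) ^ 2 + (-(r * θ * Real.cos ((1 - t) * θ))) ^ 2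
        = (r * θ) ^ 2 := by
      have := Real.sin_sq_add_cos_sq ((1 - t) * θ)
      nlinarith
    rw [this, Real.sqrt_sq (by positivity)]
  have hcd : ContDiff ℝ 1 γ := by
    have hu : ContDiff ℝ 1 (fun t : ℝ => (1 - t) * θ) :=
      ((contDiff_const.sub contDiff_id).mul contDiff_const)
    have hc : ContDiff ℝ 1 (fun t : ℝ => r * Real.cos ((1 - t) * θ)) :=
      contDiff_const.mul ((Real.contDiff_cos.of_le le_top).comp hu)
    have hs : ContDiff ℝ 1 (fun t : ℝ => r * Real.sin ((1 - t) * θ)) :=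
      contDiff_const.mul ((Real.contDiff_sin.of_le le_top).comp hu)
    exact (hc.smul contDiff_const).add (hs.smul contDiff_const)
  have hmem : ∀ t ∈ Ico (0 : ℝ) 1, γ t ∈ planarSector ω := by
    rintro t ⟨_, ht1⟩
    refine ⟨r, (1 - t) * θ, hr, by nlinarith, by nlinarith, ?_, ?_⟩
    · rw [hγ]; simp only; rw [vec_apply0]
    · rw [hγ]; simp only; rw [vec_apply1]
  refine ⟨γ, hcd.contDiffOn, ?_, hmem, ?_, ?_, ?_⟩
  · -- γ 0 = p
    ext i
    fin_cases i
    · show γ 0 0 = p 0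
      rw [hγ]; simp only; rw [vec_apply0, hp0]; norm_num
    · show γ 0 1 = p 1
      rw [hγ]; simp only; rw [vec_apply1, hp1]; norm_num
  · -- frontier
    constructor
    · have htend : Filter.Tendsto γ (𝓝[<] (1 : ℝ)) (𝓝 (γ 1)) :=
        (hcd.continuous.tendsto 1).mono_left nhdsWithin_le_nhds
      refine mem_closure_of_tendsto htend ?_
      filter_upwards [Ioo_mem_nhdsLT (show (0:ℝ) < 1 by norm_num)] with x hx
      exact hmem x ⟨hx.1.le, hx.2⟩
    · intro h
      obtain ⟨r', θ', hr', hθ'0, hθ'ω, h0, h1⟩ := interior_subset h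
      have e0 : γ 1 0 = r := by rw [hγ]; simp only; rw [vec_apply0]; norm_num
      have e1 : γ 1 1 = 0 := by rw [hγ]; simp only; rw [vec_apply1]; norm_num
      rw [e0] at h0
      rw [e1] at h1
      have hsin : Real.sin θ' = 0 := by
        rcases mul_eq_zero.1 h1.symm with h | h
        · exact absurd h hr'.ne'
        · exact h
      have hθ'π : θ' = π := sin_zero_of θ' hθ'0 (by linarith) hsin
      rw [hθ'π, Real.cos_pi] at h0
      nlinarith
  · -- γ t ≠ 0
    intro t _
    rw [← norm_ne_zero_iff, hnormγ]
    exact hr.ne'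
  · -- integral bound
    have : (∫ t in (0 : ℝ)..1, ‖γ t‖⁻¹ * ‖deriv γ t‖) = θ := by
      rw [show (∫ t in (0 : ℝ)..1, ‖γ t‖⁻¹ * ‖deriv γ t‖) = ∫ t in (0 : ℝ)..1, θ from ?_]
      · simp
      · refine intervalIntegral.integral_congr fun t _ => ?_
        rw [(hderiv t).deriv, hnormγ, hnormD]
        field_simp
    rw [this]; linarith
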